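/- Let S be a group and let L and L' be subgroups of S that are elementwise conjugate in S. Let n be a positive integer and let T be a transitive subgroup of the symmetric group Sym(Fin n). Then in the wreath product G = S ≀ T = (Fin n → S) ⋊ T, the subgroups L ≀ T and L' ≀ T are elementwise conjugate: every element of L ≀ T is conjugate in G to some element of L' ≀ T and vice versa. -/

import Mathlib

/-- The coordinate-permutation action of `Equiv.Perm α` on `α → S`:
`(σ • f) i = f (σ⁻¹ i)`. -/
def permMulAut (S : Type*) [Group S] (α : Type*) : Equiv.Perm α →* MulAut (α → S) where
  toFun σ :=
    { toFun := fun f => f ∘ σ.symm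
      invFun := fun f => f ∘ σ
      left_inv := fun f => by ext i; simp
      right_inv := fun f => by ext i; simp
      map_mul' := fun f g => rfl }
  map_one' := by ext f i; rfl
  map_mul' := fun σ τ => by ext f i; rfl

/-- The wreath product `S ≀ T` for `T` a subgroup of `Equiv.Perm α`, i.e. the semidirect
product `(α → S) ⋊ T` where `T` permutes coordinates. -/
def Wreath (S : Type*) [Group S] {α : Type*} (T : Subgroup (Equiv.Perm α)) : Type _ :=
  (α → S) ⋊[(permMulAut S α).comp T.subtype] T

instance (S : Type*) [Group S] {α : Type*} (T : Subgroup (Equiv.Perm α)) :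
    Group (Wreath S T) :=
  inferInstanceAs (Group ((α → S) ⋊[(permMulAut S α).comp T.subtype] T))

/-- The subgroup `L ≀ T` of `S ≀ T`: pairs `(f, t)` with all values of `f` in `L`. -/
def wreathSub {S : Type*} [Group S] {α : Type*} (L : Subgroup S)
    (T : Subgroup (Equiv.Perm α)) : Subgroup (Wreath S T) where
  carrier := {g : (α → S) ⋊[(permMulAut S α).comp T.subtype] T | ∀ i, g.left i ∈ L}
  one_mem' := fun i => by
    show (1 : (α → S) ⋊[(permMulAut S α).comp T.subtype] T).left i ∈ L
    simpa using one_mem L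
  mul_mem' := by
    intro (a : (α → S) ⋊[(permMulAut S α).comp T.subtype] T) (b : (α → S) ⋊[(permMulAut S α).comp T.subtype] T) ha hb i
    show (a * b).left i ∈ L
    rw [SemidirectProduct.mul_left]
    exact mul_mem (ha i) (hb _)
  inv_mem' := by
    intro (a : (α → S) ⋊[(permMulAut S α).comp T.subtype] T) ha i
    show (a⁻¹).left i ∈ L
    rw [SemidirectProduct.inv_left]
    exact inv_mem (ha _)

open Equiv

/-- Product `f i * f (u i) * ... * f (u^[k-1] i)`. -/
def cycProd {α : Type*} {S : Type*} [Group S] (f : α → S) (u : α → α) : ℕ → α → S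
  | 0, _ => 1
  | k+1, i => f i * cycProd f u k (u i)

lemma cycProd_mem {α S : Type*} [Group S] (L : Subgroup S) (f : α → S) (u : α → α)
    (hf : ∀ i, f i ∈ L) : ∀ k i, cycProd f u k i ∈ L := by
  intro k
  induction k with
  | zero => intro i; exact one_mem L
  | succ k ih => intro i; exact mul_mem (hf i) (ih (u i))

lemma wreath_EC_aux {S : Type*} [Group S] (L L' : Subgroup S)
    (h1 : ∀ h ∈ L, ∃ k ∈ L', IsConj h k)
    {n : ℕ} (T : Subgroup (Equiv.Perm (Fin n))) :
    ∀ h ∈ wreathSub L T, ∃ h' ∈ wreathSub L' T, IsConj h h' := by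
  intro h hh
  obtain ⟨f, tt⟩ := h
  have hf : ∀ i, f i ∈ L := hh
  set t : Equiv.Perm (Fin n) := (tt : Equiv.Perm (Fin n)) with htdef
  have hne : ∀ i : Fin n, (Finset.univ.filter (fun j => t.SameCycle i j)).Nonempty :=
    fun i => ⟨i, by simp [Equiv.Perm.SameCycle.refl]⟩
  set b : Fin n → Fin n := fun i => (Finset.univ.filter (fun j => t.SameCycle i j)).min' (hne i)
    with hbdef
  have hscb : ∀ i, t.SameCycle i (b i) := by
    intro i
    have := Finset.min'_mem _ (hne i)
    simpa using this
  have hbeq : ∀ i j, t.SameCycle i j → b i = b j := by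
    intro i j hij
    have hset : (Finset.univ.filter (fun x => t.SameCycle i x))
        = (Finset.univ.filter (fun x => t.SameCycle j x)) := by
      ext x
      simp only [Finset.mem_filter, Finset.mem_univ, true_and]
      exact ⟨fun hx => hij.symm.trans hx, fun hx => hij.trans hx⟩
    simp only [hbdef]
    congr 1
  have hbinv : ∀ i, b (t⁻¹ i) = b i := by
    intro i
    exact (hbeq _ _ ⟨-1, by simp⟩).symm
  have hex : ∀ i, ∃ k : ℕ, ((t⁻¹) ^ k) i = b i := by
    intro i
    obtain ⟨k, _, hk⟩ := ((hscb i).inv).exists_pow_eq'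
    exact ⟨k, hk⟩
  set K : Fin n → ℕ := fun i => Nat.find (hex i) with hKdef
  have hKspec : ∀ i, ((t⁻¹) ^ (K i)) i = b i := fun i => Nat.find_spec (hex i)
  have hK0 : ∀ i, i = b i → K i = 0 := by
    intro i hib
    exact Nat.eq_zero_of_le_zero (Nat.find_le (by simpa using hib))
  have hKsucc : ∀ i, i ≠ b i → K i = K (t⁻¹ i) + 1 := by
    intro i hib
    have hKne : K i ≠ 0 := by
      intro h0
      apply hib
      have := hKspec i
      rw [h0] at this
      simpa using this
    have le1 : K i ≤ K (t⁻¹ i) + 1 := by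
      apply Nat.find_le
      show ((t⁻¹) ^ (K (t⁻¹ i) + 1)) i = b i
      rw [pow_succ, Equiv.Perm.mul_apply, hKspec (t⁻¹ i), hbinv]
    have le2 : K (t⁻¹ i) ≤ K i - 1 := by
      apply Nat.find_le
      show ((t⁻¹) ^ (K i - 1)) (t⁻¹ i) = b (t⁻¹ i)
      rw [hbinv, ← Equiv.Perm.mul_apply, ← pow_succ, show K i - 1 + 1 = K i from by omega]
      exact hKspec i
    omega
  set Q : ℕ → Fin n → S := cycProd f (fun i => t⁻¹ i) with hQdef
  have hQmem : ∀ k i, Q k i ∈ L := cycProd_mem L f _ hf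
  have hP : ∀ j, f j * Q (K (t⁻¹ j)) (t⁻¹ j) ∈ L := fun j => mul_mem (hf j) (hQmem _ _)
  choose tgt htgt hconj using fun j => h1 _ (hP j)
  choose s hs using hconj
  set sv : Fin n → S := fun j => (s j : S) with hsvdef
  have hsv : ∀ j, sv j * (f j * Q (K (t⁻¹ j)) (t⁻¹ j)) = tgt j * sv j := fun j => (hs j).eq
  set c : Fin n → S := fun i => sv (b i) * (Q (K i) i)⁻¹ with hcdef
  set g : Fin n → S := fun i => c i * f i * (c (t⁻¹ i))⁻¹ with hgdef
  have hg : ∀ i, g i ∈ L' := by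
    intro i
    by_cases hib : i = b i
    · have hb' : b (t⁻¹ i) = i := by rw [hbinv]; exact hib.symm
      have hgi : g i = tgt i := by
        have hsi := hsv i
        simp only [hgdef, hcdef, hb', hK0 i hib, ← hib]
        show sv i * (Q 0 i)⁻¹ * f i * (sv i * (Q (K (t⁻¹ i)) (t⁻¹ i))⁻¹)⁻¹ = tgt i
        have hQ0 : Q 0 i = 1 := rfl
        rw [hQ0]
        rw [mul_inv_rev, inv_inv, inv_one, mul_one]
        calc sv i * f i * (Q (K (t⁻¹ i)) (t⁻¹ i) * (sv i)⁻¹)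
            = sv i * (f i * Q (K (t⁻¹ i)) (t⁻¹ i)) * (sv i)⁻¹ := by group
          _ = tgt i * sv i * (sv i)⁻¹ := by rw [hsi]
          _ = tgt i := by group
      rw [hgi]; exact htgt i
    · have hgi : g i = 1 := by
        simp only [hgdef, hcdef, hKsucc i hib, hbinv]
        have hQs : Q (K (t⁻¹ i) + 1) i = f i * Q (K (t⁻¹ i)) (t⁻¹ i) := rfl
        rw [hQs]
        group
      rw [hgi]; exact one_mem L'
  refine ⟨⟨g, tt⟩, hg, ?_⟩
  refine isConj_iff.mpr ?_
  refine ⟨⟨c, 1⟩, ?_⟩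
  show ((⟨c, 1⟩ : (Fin n → S) ⋊[(permMulAut S (Fin n)).comp T.subtype] T) *
      ⟨f, tt⟩ * (⟨c, 1⟩ : (Fin n → S) ⋊[(permMulAut S (Fin n)).comp T.subtype] T)⁻¹) = ⟨g, tt⟩
  ext i
  · simp only [SemidirectProduct.mul_left, SemidirectProduct.inv_left,
      SemidirectProduct.mul_right, SemidirectProduct.inv_right, inv_one, map_one,
      MulAut.one_apply, one_mul, mul_one]
    show (c * f) i * ((permMulAut S (Fin n)) t) (c⁻¹) i = g i
    show c i * f i * (c⁻¹ (t.symm i)) = g i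
    rfl
  · simp [SemidirectProduct.mul_right, SemidirectProduct.inv_right]

/-- If `L` and `L'` are elementwise conjugate subgroups of `S` and `T` is a transitive
subgroup of `Sym(Fin n)`, then `L ≀ T` and `L' ≀ T` are elementwise conjugate in `S ≀ T`. -/
theorem wreath_elementwiseConj {S : Type*} [Group S] (L L' : Subgroup S)
    (hEC : (∀ h ∈ L, ∃ k ∈ L', IsConj h k) ∧ (∀ k ∈ L', ∃ h ∈ L, IsConj k h))
    (n : ℕ) (hn : 0 < n) (T : Subgroup (Equiv.Perm (Fin n)))
    (hT : ∀ i j : Fin n, ∃ σ ∈ T, σ i = j) :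
    (∀ h ∈ wreathSub L T, ∃ h' ∈ wreathSub L' T, IsConj h h') ∧
    (∀ h' ∈ wreathSub L' T, ∃ h ∈ wreathSub L T, IsConj h' h) := by
  exact ⟨wreath_EC_aux L L' hEC.1 T, wreath_EC_aux L' L hEC.2 T⟩
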